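/- In an optimal asymmetric ND protocol, the two one-way latencies must be equal: if L_F = ω/(γ_F·β_E) and L_E = ω/(γ_E·β_F) and the pair (β_E, γ_E, β_F, γ_F) minimizes max(L_E, L_F) subject to α·β_E + γ_E = η_E and α·β_F + γ_F = η_F with all quantities positive, then L_E = L_F. Consequently γ_F/γ_E = β_F/β_E. -/
import Mathlib


/-- In an optimal asymmetric ND protocol the two one-way latencies are equal:
a minimizer of `max(L_E, L_F)` under the duty-cycle budgets satisfies
`L_E = L_F`, hence `γ_F/γ_E = β_F/β_E`. -/
theorem asymmetric_optimum_equalizes (α ω ηE ηF : ℝ) (hα : 0 < α) (hω : 0 < ω)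
    (hηE : 0 < ηE) (hηF : 0 < ηF)
    (βE γE βF γF : ℝ)
    (hβE : 0 < βE) (hγE : 0 < γE) (hβF : 0 < βF) (hγF : 0 < γF)
    (hbudE : α * βE + γE = ηE) (hbudF : α * βF + γF = ηF)
    (hmin : ∀ βE' γE' βF' γF' : ℝ,
      0 < βE' → 0 < γE' → 0 < βF' → 0 < γF' →
      α * βE' + γE' = ηE → α * βF' + γF' = ηF →
      max (ω / (γE * βF)) (ω / (γF * βE)) ≤
        max (ω / (γE' * βF')) (ω / (γF' * βE'))) :
    ω / (γE * βF) = ω / (γF * βE) ∧ γF / γE = βF / βE := by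
  have key : γE * βF = γF * βE := by
    rcases lt_trichotomy (γE * βF) (γF * βE) with h | h | h
    · -- L_E > L_F : increase βF, decrease γF
      exfalso
      set ε : ℝ := min (γF / 2) ((γF * βE - γE * βF) / (2 * βE)) with hε
      have hε1 : 0 < ε := by
        apply lt_min (by linarith)
        apply div_pos (by linarith) (by linarith)
      have hε2 : ε ≤ γF / 2 := min_le_left _ _
      have hε3 : ε ≤ (γF * βE - γE * βF) / (2 * βE) := min_le_right _ _
      have hγF' : 0 < γF - ε := by linarith
      have hβF' : 0 < βF + ε / α := by positivity
      have hkey : γE * βF < (γF - ε) * βE := by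
        have := (le_div_iff₀ (by linarith : (0:ℝ) < 2 * βE)).mp hε3
        nlinarith
      have hbig : γE * βF < γE * (βF + ε / α) := by
        have : 0 < ε / α := by positivity
        nlinarith
      have h1 : ω / (γE * (βF + ε / α)) < ω / (γE * βF) :=
        div_lt_div_of_pos_left hω (by positivity) hbig
      have h2 : ω / ((γF - ε) * βE) < ω / (γE * βF) :=
        div_lt_div_of_pos_left hω (by positivity) hkey
      have hm := hmin βE γE (βF + ε / α) (γF - ε) hβE hγE hβF' hγF'
        hbudE (by field_simp; linarith)
      have hle : ω / (γE * βF) ≤ max (ω / (γE * βF)) (ω / (γF * βE)) :=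
        le_max_left _ _
      have := max_lt h1 h2
      linarith [le_trans hm (le_of_lt this)]
    · exact h
    · -- L_F > L_E : increase βE, decrease γE
      exfalso
      set ε : ℝ := min (γE / 2) ((γE * βF - γF * βE) / (2 * βF)) with hε
      have hε1 : 0 < ε := by
        apply lt_min (by linarith)
        apply div_pos (by linarith) (by linarith)
      have hε2 : ε ≤ γE / 2 := min_le_left _ _
      have hε3 : ε ≤ (γE * βF - γF * βE) / (2 * βF) := min_le_right _ _
      have hγE' : 0 < γE - ε := by linarith
      have hβE' : 0 < βE + ε / α := by positivity
      have hkey : γF * βE < (γE - ε) * βF := by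
        have := (le_div_iff₀ (by linarith : (0:ℝ) < 2 * βF)).mp hε3
        nlinarith
      have hbig : γF * βE < γF * (βE + ε / α) := by
        have : 0 < ε / α := by positivity
        nlinarith
      have h1 : ω / (γF * (βE + ε / α)) < ω / (γF * βE) :=
        div_lt_div_of_pos_left hω (by positivity) hbig
      have h2 : ω / ((γE - ε) * βF) < ω / (γF * βE) :=
        div_lt_div_of_pos_left hω (by positivity) hkey
      have hm := hmin (βE + ε / α) (γE - ε) βF γF hβE' hγE' hβF hγF
        (by field_simp; linarith) hbudF
      have hle : ω / (γF * βE) ≤ max (ω / (γE * βF)) (ω / (γF * βE)) :=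
        le_max_right _ _
      have := max_lt h2 h1
      linarith [le_trans hm (le_of_lt this)]
  constructor
  · rw [key]
  · rw [div_eq_div_iff hγE.ne' hβE.ne']
    linarith
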